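/- Let S = {v_1,…,v_n} ⊂ ℤ^n (n ≥ 3) be non-acute, and suppose there are indices i, s, t, u with E_i = {s,t,u}, ⟨v_s,v_t⟩ = −1, ⟨v_s,e_i⟩ = −⟨v_t,e_i⟩ = ±1, |⟨v_u,e_i⟩| = 1, and ⟨v_u,v_u⟩ ≥ 3. Let S' = (S \ {v_s, v_t, v_u}) ∪ {v_s + v_t, v_u − ⟨v_u,e_i⟩e_i} ⊂ ℤ^{n−1} be the corresponding contraction of S, viewed in the span of the e_j with j ≠ i. Let W = Σ k_α e_α and W' = Σ_{α≠i} k'_α e_α be the Wu elements of S and S', with R_o and R_o' the sets of indices where these coefficients are odd. Then Σ_{α=1}^n k_α² > 4n − 3|R_o| if and only if Σ_{α≠i} (k'_α)² > 4(n−1) − 3|R_o'|. -/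

import Mathlib

open Finset

/-- The standard dot product on `ℤ^n`. -/
def dotZ {n : ℕ} (v w : Fin n → ℤ) : ℤ := ∑ i, v i * w i

/-- A family `v_1, …, v_n` of vectors in `ℤ^n` is non-acute. -/
def NonAcute {n : ℕ} (v : Fin n → Fin n → ℤ) : Prop :=
  (∀ i, 1 ≤ dotZ (v i) (v i)) ∧
  (∀ i j, i ≠ j → dotZ (v i) (v j) ≤ 0) ∧
  (∀ i, -(∑ j ∈ univ.erase i, dotZ (v j) (v i)) ≤ dotZ (v i) (v i))

theorem stmt_2 {n : ℕ} (hn : 3 ≤ n) (v : Fin n → Fin n → ℤ) (hna : NonAcute v)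
    (i s t u : Fin n) (hst : s ≠ t) (hsu : s ≠ u) (htu : t ≠ u)
    (hE : univ.filter (fun α => v α i ≠ 0) = {s, t, u})
    (hvst : dotZ (v s) (v t) = -1)
    (hsti : v s i = -(v t i)) (hsi : v s i = 1 ∨ v s i = -1)
    (hui : v u i = 1 ∨ v u i = -1)
    (hau : 3 ≤ dotZ (v u) (v u))
    -- `W` is the Wu element of `S`
    (W : Fin n → ℤ) (hW : W = ∑ α, v α)
    -- `W'` is the Wu element of the contraction `S'`, whose coordinates in
    -- the span of the `e_j`, `j ≠ i`, are `W' α` for `α ≠ i`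
    (W' : Fin n → ℤ)
    (hW' : W' = (∑ α ∈ univ \ {s, t, u}, v α)
      + ((v s + v t) + (v u - Pi.single i (v u i)))) :
    (∑ α, (W α) ^ 2 >
        4 * (n : ℤ) - 3 * ((univ.filter fun α => Odd (W α)).card : ℤ)) ↔
    (∑ α ∈ univ.erase i, (W' α) ^ 2 >
        4 * ((n : ℤ) - 1) -
          3 * (((univ.erase i).filter fun α => Odd (W' α)).card : ℤ)) := by
  have hsub : ({s, t, u} : Finset (Fin n)) ⊆ univ := subset_univ _
  -- sum over {s,t,u}
  have hsum3 : ∀ (f : Fin n → Fin n → ℤ),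
      ∑ α ∈ ({s, t, u} : Finset (Fin n)), f α = f s + f t + f u := by
    intro f
    rw [sum_insert (by simp [hst, hsu]), sum_insert (by simp [htu]), sum_singleton, add_assoc]
  -- W = W' + single
  have hWdecomp : W = W' + Pi.single i (v u i) := by
    rw [hW, hW']
    have := Finset.sum_sdiff (f := fun α => v α) hsub
    rw [hsum3 (fun α => v α)] at this
    rw [← this]
    abel
  -- W i = v u i
  have hWi : W i = v u i := by
    rw [hW]
    have hvanish : ∀ x ∈ (univ : Finset (Fin n)), x ∉ ({s, t, u} : Finset (Fin n)) →
        v x i = 0 := by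
      intro x _ hx
      by_contra h
      exact hx (hE ▸ mem_filter.mpr ⟨mem_univ x, h⟩)
    have : ∑ α, v α i = ∑ α ∈ ({s, t, u} : Finset (Fin n)), v α i :=
      (Finset.sum_subset hsub (fun x hx hxn => hvanish x hx hxn)).symm
    simp only [Finset.sum_apply]
    rw [this, sum_insert (by simp [hst, hsu]), sum_insert (by simp [htu]), sum_singleton]
    omega
  -- W' agrees with W off i
  have hW'eq : ∀ α ∈ univ.erase i, W' α = W α := by
    intro α hα
    have hne : α ≠ i := (mem_erase.mp hα).1
    rw [hWdecomp]
    simp [Pi.single_eq_of_ne hne]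
  -- split the sum
  have hsumsplit : ∑ α, (W α) ^ 2 = (∑ α ∈ univ.erase i, (W α) ^ 2) + 1 := by
    rw [← Finset.sum_erase_add _ _ (mem_univ i), hWi]
    rcases hui with h | h <;> rw [h] <;> ring
  have hsums : ∑ α ∈ univ.erase i, (W' α) ^ 2 = ∑ α ∈ univ.erase i, (W α) ^ 2 :=
    Finset.sum_congr rfl (fun α hα => by rw [hW'eq α hα])
  -- cards
  have hOddWi : Odd (W i) := by rw [hWi]; rcases hui with h | h <;> rw [h] <;> decide
  have hcard : (univ.filter fun α => Odd (W α)).card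
      = ((univ.erase i).filter fun α => Odd (W α)).card + 1 := by
    rw [← Finset.insert_erase (mem_univ i), filter_insert, if_pos hOddWi,
      card_insert_of_notMem (by simp), Finset.erase_insert (notMem_erase i univ)]
  have hfilt : ((univ.erase i).filter fun α => Odd (W' α))
      = ((univ.erase i).filter fun α => Odd (W α)) :=
    filter_congr (fun α hα => by rw [hW'eq α hα])
  rw [hsumsplit, hsums, hcard, hfilt]
  push_cast
  constructor <;> intro h <;> linarith
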